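/- Let m ≥ 1, N ∈ ℕ, and x_1, …, x_m ∈ ℝ. Then ∑_{α ∈ J_N} ∏_{k=1}^m L_{α_k}(x_k) = ∑_{j=0}^N (−1)^j (binom(N+m−1, N−j)) (x_1 + ⋯ + x_m)^j / j!, i.e. the sum over all occupation vectors with total N of the products of Laguerre polynomials equals the generalized Laguerre polynomial L_N^{(m−1)} evaluated at the sum of the variables. -/

import Mathlib

/-- The Laguerre polynomial `L_n(x) = ∑_{k=0}^n (-1)^k (n choose k) x^k / k!`. -/
noncomputable def laguerre (n : ℕ) (x : ℝ) : ℝ :=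
  ∑ k ∈ Finset.range (n + 1), (-1) ^ k * (n.choose k : ℝ) * x ^ k / (k.factorial : ℝ)

open Finset

theorem hockey (q : ℕ) : ∀ M : ℕ, ∑ t ∈ range (M+1), (t+q).choose t = (M+q+1).choose M := by
  intro M
  induction M with
  | zero => simp
  | succ M ih =>
      rw [Finset.sum_range_succ, ih]
      have h1 : M + 1 + q + 1 = (M + q + 1) + 1 := by ring
      have h2 : M + 1 + q = M + q + 1 := by ring
      rw [h1, h2]
      conv_rhs => rw [Nat.choose_succ_succ']

theorem vand (r q : ℕ) : ∀ M : ℕ,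
    ∑ s ∈ range (M+1), (s+r).choose s * (M-s+q).choose (M-s) = (M+r+q+1).choose M := by
  induction r with
  | zero =>
      intro M
      have h : ∀ s ∈ range (M+1), (s+0).choose s * (M-s+q).choose (M-s)
          = (M-s+q).choose (M-s) := by intro s _; simp
      rw [Finset.sum_congr rfl h, ← Finset.sum_range_reflect]
      have h2 : ∀ s ∈ range (M+1), (M - (M + 1 - 1 - s) + q).choose (M - (M + 1 - 1 - s)) = (s+q).choose s := by
        intro s hs; rw [Finset.mem_range] at hs
        congr 1 <;> omega
      rw [Finset.sum_congr rfl h2, hockey]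
      norm_num
  | succ r ihr =>
      intro M
      induction M with
      | zero => simp
      | succ M ihM =>
          rw [Finset.sum_range_succ']
          have key : ∀ s ∈ range (M+1),
              (s + 1 + (r+1)).choose (s+1) * (M + 1 - (s+1) + q).choose (M + 1 - (s+1))
              = (s + (r+1)).choose s * (M - s + q).choose (M-s)
                + (s + 1 + r).choose (s+1) * (M - s + q).choose (M-s) := by
            intro s hs
            have h1 : s + 1 + (r+1) = (s + (r+1)) + 1 := by ring
            have h2 : M + 1 - (s+1) = M - s := by omega
            rw [h1, h2, Nat.choose_succ_succ', add_mul]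
            congr 3
            omega
          rw [Finset.sum_congr rfl key, Finset.sum_add_distrib, ihM]
          have hv := ihr (M+1)
          rw [Finset.sum_range_succ'] at hv
          have h3 : ∀ k ∈ range (M+1),
              (k + 1 + r).choose (k+1) * (M + 1 - (k+1) + q).choose (M + 1 - (k+1))
              = (k + 1 + r).choose (k+1) * (M - k + q).choose (M - k) := by
            intro k hk
            have : M + 1 - (k+1) = M - k := by omega
            rw [this]
          rw [Finset.sum_congr rfl h3] at hv
          simp only [Nat.zero_add, Nat.choose_zero_right, one_mul, Nat.sub_zero] at hv ⊢
          have expand : (M+1+(r+1)+q+1).choose (M+1)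
              = (M+(r+1)+q+1).choose M + (M+1+r+q+1).choose (M+1) := by
            have e1 : M+1+(r+1)+q+1 = (M+(r+1)+q+1)+1 := by ring
            have e2 : M+1+r+q+1 = M+(r+1)+q+1 := by ring
            rw [e1, Nat.choose_succ_succ', e2]
          omega

theorem conv_choose (β i j N : ℕ) :
    ∑ p ∈ Finset.HasAntidiagonal.antidiagonal N, (p.1.choose i) * ((p.2+β).choose (β+j)) =
      if i+j ≤ N then (N+β+1).choose (N-(i+j)) else 0 := by
  rw [Finset.Nat.sum_antidiagonal_eq_sum_range_succ_mk]
  by_cases h : i + j ≤ N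
  · rw [if_pos h]
    set M := N - (i+j) with hM
    have hsub : Finset.Ico i (i+M+1) ⊆ range (N+1) := by
      intro a ha; rw [Finset.mem_Ico] at ha; rw [Finset.mem_range]; omega
    rw [← Finset.sum_subset hsub]
    · rw [Finset.sum_Ico_eq_sum_range]
      have h2 : ∀ s ∈ range (i+M+1-i), (i+s).choose i * (N-(i+s)+β).choose (β+j)
          = (s+i).choose s * (M-s+(β+j)).choose (M-s) := by
        intro s hs
        rw [Finset.mem_range] at hs
        have e2 : N - (i+s) + β = (M-s) + (β+j) := by omega
        have f1 : (i+s).choose i = (s+i).choose s := by rw [Nat.choose_symm_add, add_comm]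
        have f2 : (N-(i+s)+β).choose (β+j) = (M-s+(β+j)).choose (M-s) := by
          rw [e2, add_comm (M-s) (β+j), Nat.choose_symm_add]
        rw [f1, f2]
      have h3 : i + M + 1 - i = M + 1 := by omega
      rw [h3] at h2 ⊢
      rw [Finset.sum_congr rfl h2, vand]
      congr 1
      omega
    · intro a ha hna
      rw [Finset.mem_range] at ha
      rw [Finset.mem_Ico] at hna
      rcases lt_or_ge a i with hai | hai
      · rw [Nat.choose_eq_zero_of_lt hai, zero_mul]
      · have : N - a + β < β + j := by omega
        rw [Nat.choose_eq_zero_of_lt this, mul_zero]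
  · rw [if_neg h]
    apply Finset.sum_eq_zero
    intro a ha
    rw [Finset.mem_range] at ha
    rcases lt_or_ge a i with hai | hai
    · rw [Nat.choose_eq_zero_of_lt hai, zero_mul]
    · have : N - a + β < β + j := by omega
      rw [Nat.choose_eq_zero_of_lt this, mul_zero]

theorem triangle (F : ℕ → ℕ → ℝ) (N : ℕ) :
    ∑ p ∈ range (N+1), ∑ i ∈ range (p+1), F i (p-i)
      = ∑ i ∈ range (N+1), ∑ j ∈ range (N+1-i), F i j := by
  induction N with
  | zero => simp
  | succ N ih =>
      rw [Finset.sum_range_succ, ih]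
      rw [Finset.sum_range_succ (fun i => ∑ j ∈ range (N+1+1-i), F i j)]
      have h1 : ∀ i ∈ range (N+1), ∑ j ∈ range (N+1+1-i), F i j
          = ∑ j ∈ range (N+1-i), F i j + F i (N+1-i) := by
        intro i hi
        rw [Finset.mem_range] at hi
        have : N + 1 + 1 - i = (N+1-i) + 1 := by omega
        rw [this, Finset.sum_range_succ]
      rw [Finset.sum_congr rfl h1, Finset.sum_add_distrib]
      have h2 : N + 1 + 1 - (N+1) = 1 := by omega
      rw [h2]
      rw [Finset.sum_range_succ (fun i => F i (N+1-i))]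
      simp only [Finset.sum_range_one, Nat.sub_self]
      ring


theorem conv (β N : ℕ) (x y : ℝ) :
    ∑ p ∈ Finset.HasAntidiagonal.antidiagonal N, laguerre p.1 x *
        (∑ j ∈ range (p.2+1), (-1:ℝ)^j * ((p.2+β).choose (p.2-j) : ℝ) * y^j / (j.factorial : ℝ))
      = ∑ j ∈ range (N+1), (-1:ℝ)^j * ((N+β+1).choose (N-j) : ℝ) * (x+y)^j / (j.factorial : ℝ) := by
  -- Step A/B : rewrite each factor as a sum over range (N+1)
  have hA : ∀ p ∈ Finset.HasAntidiagonal.antidiagonal N, laguerre p.1 x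
      = ∑ i ∈ range (N+1), (-1:ℝ)^i * x^i / (i.factorial : ℝ) * (p.1.choose i : ℝ) := by
    intro p hp
    rw [Finset.HasAntidiagonal.mem_antidiagonal] at hp
    unfold laguerre
    rw [Finset.sum_subset (Finset.range_subset_range.2 (by omega : p.1 + 1 ≤ N + 1))]
    · apply Finset.sum_congr rfl
      intro i _; ring
    · intro i _ hi
      rw [Finset.mem_range, not_lt] at hi
      rw [Nat.choose_eq_zero_of_lt (by omega)]
      simp
  have hB : ∀ p ∈ Finset.HasAntidiagonal.antidiagonal N,
      (∑ j ∈ range (p.2+1), (-1:ℝ)^j * ((p.2+β).choose (p.2-j) : ℝ) * y^j / (j.factorial : ℝ))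
      = ∑ j ∈ range (N+1), (-1:ℝ)^j * y^j / (j.factorial : ℝ) * (((p.2+β).choose (β+j)) : ℝ) := by
    intro p hp
    rw [Finset.HasAntidiagonal.mem_antidiagonal] at hp
    have e1 : ∀ j ∈ range (p.2+1), (-1:ℝ)^j * ((p.2+β).choose (p.2-j) : ℝ) * y^j / (j.factorial : ℝ)
        = (-1:ℝ)^j * y^j / (j.factorial : ℝ) * (((p.2+β).choose (β+j)) : ℝ) := by
      intro j hj
      rw [Finset.mem_range] at hj
      have : (p.2+β).choose (p.2-j) = (p.2+β).choose (β+j) := by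
        rw [← Nat.choose_symm (by omega : β + j ≤ p.2 + β)]
        congr 1
        omega
      rw [this]; ring
    rw [Finset.sum_congr rfl e1]
    rw [Finset.sum_subset (Finset.range_subset_range.2 (by omega : p.2 + 1 ≤ N + 1))]
    intro j _ hj
    rw [Finset.mem_range, not_lt] at hj
    rw [Nat.choose_eq_zero_of_lt (by omega : p.2 + β < β + j)]
    simp
  rw [Finset.sum_congr rfl (fun p hp => by rw [hA p hp, hB p hp])]
  -- expand products and swap sums
  rw [Finset.sum_congr rfl (fun p _ => Finset.sum_mul_sum (range (N+1)) (range (N+1)) _ _)]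
  rw [Finset.sum_comm]
  rw [Finset.sum_congr rfl (fun i _ => Finset.sum_comm)]
  -- inner sum over antidiagonal
  have hinner : ∀ i ∈ range (N+1), ∀ j ∈ range (N+1),
      ∑ p ∈ Finset.HasAntidiagonal.antidiagonal N,
        ((-1:ℝ)^i * x^i / (i.factorial : ℝ) * (p.1.choose i : ℝ))
          * ((-1:ℝ)^j * y^j / (j.factorial : ℝ) * (((p.2+β).choose (β+j)) : ℝ))
      = if i + j ≤ N then
          ((-1:ℝ)^i * x^i / (i.factorial : ℝ)) * ((-1:ℝ)^j * y^j / (j.factorial : ℝ))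
            * (((N+β+1).choose (N-(i+j))) : ℝ)
        else 0 := by
    intro i _ j _
    have : ∀ p ∈ Finset.HasAntidiagonal.antidiagonal N,
        ((-1:ℝ)^i * x^i / (i.factorial : ℝ) * (p.1.choose i : ℝ))
          * ((-1:ℝ)^j * y^j / (j.factorial : ℝ) * (((p.2+β).choose (β+j)) : ℝ))
        = ((-1:ℝ)^i * x^i / (i.factorial : ℝ)) * ((-1:ℝ)^j * y^j / (j.factorial : ℝ))
            * ((p.1.choose i * ((p.2+β).choose (β+j)) : ℕ) : ℝ) := by
      intro p _; push_cast; ring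
    rw [Finset.sum_congr rfl this, ← Finset.mul_sum, ← Nat.cast_sum, conv_choose]
    by_cases h : i + j ≤ N
    · rw [if_pos h, if_pos h]
    · rw [if_neg h, if_neg h]; simp
  rw [Finset.sum_congr rfl (fun i hi => Finset.sum_congr rfl (fun j hj => hinner i hi j hj))]
  -- now handle RHS
  have hRHS : ∀ p ∈ range (N+1), (-1:ℝ)^p * ((N+β+1).choose (N-p) : ℝ) * (x+y)^p / (p.factorial : ℝ)
      = ∑ i ∈ range (p+1),
          ((-1:ℝ)^i * x^i / (i.factorial : ℝ)) * ((-1:ℝ)^(p-i) * y^(p-i) / ((p-i).factorial : ℝ))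
            * (((N+β+1).choose (N-(i+(p-i)))) : ℝ) := by
    intro p _
    rw [add_pow, Finset.mul_sum, Finset.sum_div]
    apply Finset.sum_congr rfl
    intro i hi
    rw [Finset.mem_range] at hi
    have hip : i ≤ p := by omega
    have hfac : (p.choose i : ℝ) * (i.factorial : ℝ) * ((p-i).factorial : ℝ) = (p.factorial : ℝ) := by
      rw [← Nat.cast_mul, ← Nat.cast_mul, Nat.choose_mul_factorial_mul_factorial hip]
    have hpow : (-1:ℝ)^p = (-1:ℝ)^i * (-1:ℝ)^(p-i) := by
      rw [← pow_add]; congr 1; omega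
    have hsum : i + (p - i) = p := by omega
    rw [hsum, hpow]
    have h1 : (i.factorial : ℝ) ≠ 0 := Nat.cast_ne_zero.2 (Nat.factorial_ne_zero i)
    have h2 : ((p-i).factorial : ℝ) ≠ 0 := Nat.cast_ne_zero.2 (Nat.factorial_ne_zero (p-i))
    have h3 : (p.factorial : ℝ) ≠ 0 := Nat.cast_ne_zero.2 (Nat.factorial_ne_zero p)
    field_simp
    rw [← hfac]
    ring
  rw [Finset.sum_congr rfl hRHS]
  rw [triangle (fun i j => ((-1:ℝ)^i * x^i / (i.factorial : ℝ))
      * ((-1:ℝ)^j * y^j / (j.factorial : ℝ)) * (((N+β+1).choose (N-(i+j))) : ℝ)) N]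
  -- match the two triangular sums
  apply Finset.sum_congr rfl
  intro i hi
  rw [Finset.mem_range] at hi
  rw [← Finset.sum_subset (Finset.range_subset_range.2 (by omega : N + 1 - i ≤ N + 1))]
  · apply Finset.sum_congr rfl
    intro j hj
    rw [Finset.mem_range] at hj
    rw [if_pos (by omega : i + j ≤ N)]
  · intro j hj hnj
    rw [Finset.mem_range] at hj
    rw [Finset.mem_range, not_lt] at hnj
    rw [if_neg (by omega : ¬ (i + j ≤ N))]

theorem sum_tuple_succ (m N : ℕ) (f : (Fin (m+1) → ℕ) → ℝ) :
    ∑ α ∈ Finset.Nat.antidiagonalTuple (m+1) N, f α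
      = ∑ p ∈ Finset.HasAntidiagonal.antidiagonal N, ∑ β ∈ Finset.Nat.antidiagonalTuple m p.2,
          f (Fin.cons p.1 β) := by
  rw [Finset.sum_sigma' (Finset.HasAntidiagonal.antidiagonal N)
    (fun p => Finset.Nat.antidiagonalTuple m p.2) (fun p β => f (Fin.cons p.1 β))]
  apply Finset.sum_nbij' (i := fun α => (⟨(α 0, N - α 0), Fin.tail α⟩ :
      Σ _p : ℕ × ℕ, Fin m → ℕ)) (j := fun q => Fin.cons q.1.1 q.2)
  · intro α hα
    rw [Finset.Nat.mem_antidiagonalTuple, Fin.sum_univ_succ] at hα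
    simp only [Finset.mem_sigma, Finset.HasAntidiagonal.mem_antidiagonal, Finset.Nat.mem_antidiagonalTuple,
      Fin.tail]
    omega
  · rintro ⟨⟨a, b⟩, β⟩ hq
    rw [Finset.mem_sigma, Finset.HasAntidiagonal.mem_antidiagonal, Finset.Nat.mem_antidiagonalTuple] at hq
    dsimp only at hq
    rw [Finset.Nat.mem_antidiagonalTuple, Fin.sum_univ_succ]
    simp only [Fin.cons_zero, Fin.cons_succ]
    omega
  · intro α _
    exact Fin.cons_self_tail α
  · rintro ⟨⟨a, b⟩, β⟩ hq
    rw [Finset.mem_sigma, Finset.HasAntidiagonal.mem_antidiagonal] at hq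
    dsimp only at hq ⊢
    simp only [Fin.cons_zero, Fin.tail_cons]
    have : N - a = b := by omega
    rw [this]
  · intro α _
    rw [Fin.cons_self_tail α]


/-- Summing products of Laguerre polynomials over all occupation vectors with total `N`
gives the generalized Laguerre polynomial `L_N^{(m-1)}` of the sum of the variables. -/
theorem sum_prod_laguerre_eq_genLaguerre (m N : ℕ) (hm : 1 ≤ m) (x : Fin m → ℝ) :
    ∑ α ∈ Finset.Nat.antidiagonalTuple m N, ∏ k, laguerre (α k) (x k) =
      ∑ j ∈ Finset.range (N + 1),
        (-1) ^ j * ((N + m - 1).choose (N - j) : ℝ) * (∑ k, x k) ^ j / (j.factorial : ℝ) := by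
  obtain ⟨m', rfl⟩ : ∃ m', m = m' + 1 := ⟨m - 1, by omega⟩
  clear hm
  induction m' generalizing N with
  | zero =>
      rw [Finset.Nat.antidiagonalTuple_one, Finset.sum_singleton]
      have h0 : ∀ k : Fin 1, (![N] : Fin 1 → ℕ) k = N := by
        intro k
        have : k = 0 := Subsingleton.elim _ _
        rw [this]
        rfl
      rw [Finset.prod_congr rfl (fun k _ => by rw [h0 k]), Fin.prod_univ_one]
      unfold laguerre
      apply Finset.sum_congr rfl
      intro j hj
      rw [Finset.mem_range] at hj
      have e1 : N + 1 - 1 = N := by omega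
      have e2 : N.choose (N - j) = N.choose j := Nat.choose_symm (by omega : j ≤ N)
      rw [e1, e2]
      rw [Fin.sum_univ_one]
  | succ n ih =>
      rw [sum_tuple_succ (n+1) N (fun α => ∏ k, laguerre (α k) (x k))]
      have step : ∀ p ∈ Finset.HasAntidiagonal.antidiagonal N,
          (∑ β ∈ Finset.Nat.antidiagonalTuple (n+1) p.2,
            ∏ k, laguerre ((Fin.cons p.1 β : Fin (n+2) → ℕ) k) (x k))
          = laguerre p.1 (x 0) *
              (∑ j ∈ Finset.range (p.2+1), (-1:ℝ)^j * ((p.2+n).choose (p.2-j) : ℝ)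
                * (∑ k : Fin (n+1), x k.succ)^j / (j.factorial : ℝ)) := by
        intro p _
        have hprod : ∀ β ∈ Finset.Nat.antidiagonalTuple (n+1) p.2,
            (∏ k, laguerre ((Fin.cons p.1 β : Fin (n+2) → ℕ) k) (x k))
            = laguerre p.1 (x 0) * ∏ k : Fin (n+1), laguerre (β k) (x k.succ) := by
          intro β _
          rw [Fin.prod_univ_succ]
          simp only [Fin.cons_zero, Fin.cons_succ]
        rw [Finset.sum_congr rfl hprod, ← Finset.mul_sum]
        congr 1
        rw [ih p.2 (fun k => x k.succ)]
        apply Finset.sum_congr rfl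
        intro j _
        have : p.2 + (n + 1) - 1 = p.2 + n := by omega
        rw [this]
      rw [Finset.sum_congr rfl step, conv n N (x 0) (∑ k : Fin (n+1), x k.succ)]
      apply Finset.sum_congr rfl
      intro j _
      have e1 : N + (n + 1 + 1) - 1 = N + n + 1 := by omega
      rw [e1, show (∑ k : Fin (n+1+1), x k) = x 0 + ∑ k : Fin (n+1), x k.succ from
        Fin.sum_univ_succ x]
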